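/- Suppose A - λE is an n×n regular pencil and C(λE - A)⁻¹B + D = G(λ). If G(λ) = R(λ)·X(λ) with R of full column rank r, then the rank over F(λ) of the block matrix [[A_R - λE_R, B_R, 0, 0], [0, 0, A - λE, B], [C_R, D_R, C, D]] equals n_R + n + r, where (A_R - λE_R, B_R, C_R, D_R) is an n_R-dimensional realization of R(λ) with A_R - λE_R regular. -/

import Mathlib

set_option synthInstance.maxHeartbeats 1000000
set_option maxHeartbeats 1000000
open Matrix

/-- Embed a constant matrix over F into matrices over the rational functions F(λ). -/
noncomputable def constMat {F : Type*} [Field F] {a b : ℕ}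
    (M : Matrix (Fin a) (Fin b) F) : Matrix (Fin a) (Fin b) (RatFunc F) :=
  M.map (algebraMap F (RatFunc F))

/-- The matrix pencil A - λE viewed over F(λ). -/
noncomputable def pencil {F : Type*} [Field F] {a : ℕ}
    (A E : Matrix (Fin a) (Fin a) F) : Matrix (Fin a) (Fin a) (RatFunc F) :=
  constMat A - (RatFunc.X : RatFunc F) • constMat E

section Aux

variable {K : Type*} [Field K]

/-- Rank is invariant under reindexing (rectangular version). -/
lemma aux_rank_reindex {m n m' n' : Type*} [Fintype m] [Fintype n] [Fintype m'] [Fintype n']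
    [DecidableEq n] [DecidableEq n'] (e₁ : m ≃ m') (e₂ : n ≃ n') (A : Matrix m n K) :
    (Matrix.reindex e₁ e₂ A).rank = A.rank := by
  rw [Matrix.rank, Matrix.rank, Matrix.mulVecLin_reindex, LinearMap.range_comp,
    LinearMap.range_comp, LinearEquiv.range, Submodule.map_top, LinearEquiv.finrank_map_eq]

lemma aux_rank_eq_card_of_ker {m n : Type*} [Fintype m] [Fintype n] [DecidableEq n]
    (A : Matrix m n K) (h : LinearMap.ker A.mulVecLin = ⊥) :
    A.rank = Fintype.card n := by
  have h2 := LinearMap.finrank_range_add_finrank_ker A.mulVecLin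
  rw [h, finrank_bot, add_zero, Module.finrank_fintype_fun_eq_card] at h2
  exact h2

lemma aux_ker_eq_bot_of_rank {m n : Type*} [Fintype m] [Fintype n] [DecidableEq n]
    (A : Matrix m n K) (h : A.rank = Fintype.card n) :
    LinearMap.ker A.mulVecLin = ⊥ := by
  have h2 := LinearMap.finrank_range_add_finrank_ker A.mulVecLin
  rw [Module.finrank_fintype_fun_eq_card] at h2
  rw [Matrix.rank] at h
  have : Module.finrank K (LinearMap.ker A.mulVecLin) = 0 := by omega
  exact Submodule.finrank_eq_zero.mp this

lemma aux_fromColumns_sub {m n₁ n₂ : Type*} (A : Matrix m n₁ K) (B : Matrix m n₂ K)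
    (C : Matrix m n₁ K) (D : Matrix m n₂ K) :
    Matrix.fromCols A B - Matrix.fromCols C D = Matrix.fromCols (A - C) (B - D) := by
  ext i (j | j) <;> simp

end Aux

/-- If A - λE is a regular pencil realizing G(λ) = C(λE-A)⁻¹B + D and
G = R·X with R of full column rank r realized by the regular pencil
A_R - λE_R, then the rank over F(λ) of the block matrix
[[A_R-λE_R, B_R, 0, 0],[0, 0, A-λE, B],[C_R, D_R, C, D]] equals n_R + n + r. -/
theorem rank_of_compound_system_pencil (F : Type*) [Field F]
    (n nR p m r : ℕ)
    (A E : Matrix (Fin n) (Fin n) F) (B : Matrix (Fin n) (Fin m) F)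
    (C : Matrix (Fin p) (Fin n) F) (D : Matrix (Fin p) (Fin m) F)
    (AR ER : Matrix (Fin nR) (Fin nR) F) (BR : Matrix (Fin nR) (Fin r) F)
    (CR : Matrix (Fin p) (Fin nR) F) (DR : Matrix (Fin p) (Fin r) F)
    (hreg : (pencil A E).det ≠ 0)
    (hregR : (pencil AR ER).det ≠ 0)
    (G : Matrix (Fin p) (Fin m) (RatFunc F))
    (R : Matrix (Fin p) (Fin r) (RatFunc F))
    (hG : G = constMat C * ((RatFunc.X : RatFunc F) • constMat E - constMat A)⁻¹ * constMat B
            + constMat D)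
    (hR : R = constMat CR * ((RatFunc.X : RatFunc F) • constMat ER - constMat AR)⁻¹ * constMat BR
            + constMat DR)
    (Xf : Matrix (Fin r) (Fin m) (RatFunc F))
    (hfac : G = R * Xf) (hRrank : R.rank = r) :
    (Matrix.fromBlocks
      (Matrix.fromBlocks (pencil AR ER) (constMat BR) 0 0)
      (Matrix.fromBlocks 0 0 (pencil A E) (constMat B))
      (Matrix.fromCols (constMat CR) (constMat DR))
      (Matrix.fromCols (constMat C) (constMat D))).rank = nR + n + r := by
  classical
  -- invertibility of the two pencils
  haveI hiR : Invertible (pencil AR ER) :=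
    (pencil AR ER).invertibleOfIsUnitDet (isUnit_iff_ne_zero.mpr hregR)
  haveI hi : Invertible (pencil A E) :=
    (pencil A E).invertibleOfIsUnitDet (isUnit_iff_ne_zero.mpr hreg)
  -- the rearranged matrix
  set T : Matrix (Fin nR ⊕ Fin n) (Fin nR ⊕ Fin n) (RatFunc F) :=
    Matrix.fromBlocks (pencil AR ER) 0 0 (pencil A E) with hT
  set U : Matrix (Fin nR ⊕ Fin n) (Fin r ⊕ Fin m) (RatFunc F) :=
    Matrix.fromBlocks (constMat BR) 0 0 (constMat B) with hU
  set V : Matrix (Fin p) (Fin nR ⊕ Fin n) (RatFunc F) :=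
    Matrix.fromCols (constMat CR) (constMat C) with hV
  set W : Matrix (Fin p) (Fin r ⊕ Fin m) (RatFunc F) :=
    Matrix.fromCols (constMat DR) (constMat D) with hW
  haveI hiT : Invertible T := Matrix.fromBlocksZero₂₁Invertible (pencil AR ER) 0 (pencil A E)
  -- Step 1: the original matrix is a column-permuted version of fromBlocks T U V W
  have hperm :
      (Matrix.fromBlocks
        (Matrix.fromBlocks (pencil AR ER) (constMat BR) 0 0)
        (Matrix.fromBlocks 0 0 (pencil A E) (constMat B))
        (Matrix.fromCols (constMat CR) (constMat DR))
        (Matrix.fromCols (constMat C) (constMat D))) =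
      Matrix.reindex (Equiv.refl _)
        (Equiv.sumSumSumComm (Fin nR) (Fin n) (Fin r) (Fin m))
        (Matrix.fromBlocks T U V W) := by
    ext i j
    rcases i with (i | i) | i <;>
      rcases j with (j | j) | (j | j) <;>
        simp [hT, hU, hV, hW, Matrix.fromBlocks, Matrix.fromCols]
  rw [hperm, aux_rank_reindex]
  -- Step 2: LDU factorization (Schur complement)
  have hLDU := Matrix.fromBlocks_eq_of_invertible₁₁ T U V W
  rw [hLDU]
  have hdet1 : IsUnit (Matrix.fromBlocks (1 : Matrix (Fin nR ⊕ Fin n) _ (RatFunc F)) (⅟T * U) 0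
      (1 : Matrix (Fin r ⊕ Fin m) _ (RatFunc F))).det := by
    rw [Matrix.det_fromBlocks_zero₂₁]; simp
  have hdet2 : IsUnit (Matrix.fromBlocks (1 : Matrix (Fin nR ⊕ Fin n) _ (RatFunc F)) 0 (V * ⅟T)
      (1 : Matrix (Fin p) _ (RatFunc F))).det := by
    rw [Matrix.det_fromBlocks_zero₁₂]; simp
  rw [Matrix.rank_mul_eq_left_of_isUnit_det _ _ hdet1,
    Matrix.rank_mul_eq_right_of_isUnit_det _ _ hdet2]
  -- Step 3: compute the Schur complement W - V * ⅟T * U = fromColumns R G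
  have hinvT : ⅟T = Matrix.fromBlocks (⅟(pencil AR ER)) 0 0 (⅟(pencil A E)) := by
    apply invOf_eq_right_inv
    rw [hT, Matrix.fromBlocks_multiply]
    simp [← Matrix.fromBlocks_one]
  have hinvPR : (⅟(pencil AR ER) : Matrix (Fin nR) (Fin nR) (RatFunc F)) =
      -(((RatFunc.X : RatFunc F) • constMat ER - constMat AR)⁻¹) := by
    rw [Matrix.invOf_eq_nonsing_inv]
    have hQ : pencil AR ER = -((RatFunc.X : RatFunc F) • constMat ER - constMat AR) := by
      rw [pencil]; exact (neg_sub _ _).symm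
    have hQdet : IsUnit ((RatFunc.X : RatFunc F) • constMat ER - constMat AR).det := by
      rw [isUnit_iff_ne_zero]
      intro h0
      apply hregR
      rw [hQ, Matrix.det_neg, h0, mul_zero]
    apply Matrix.inv_eq_right_inv
    rw [hQ, Matrix.neg_mul, Matrix.mul_neg, neg_neg, Matrix.mul_nonsing_inv _ hQdet]
  have hinvP : (⅟(pencil A E) : Matrix (Fin n) (Fin n) (RatFunc F)) =
      -(((RatFunc.X : RatFunc F) • constMat E - constMat A)⁻¹) := by
    rw [Matrix.invOf_eq_nonsing_inv]
    have hQ : pencil A E = -((RatFunc.X : RatFunc F) • constMat E - constMat A) := by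
      rw [pencil]; exact (neg_sub _ _).symm
    have hQdet : IsUnit ((RatFunc.X : RatFunc F) • constMat E - constMat A).det := by
      rw [isUnit_iff_ne_zero]
      intro h0
      apply hreg
      rw [hQ, Matrix.det_neg, h0, mul_zero]
    apply Matrix.inv_eq_right_inv
    rw [hQ, Matrix.neg_mul, Matrix.mul_neg, neg_neg, Matrix.mul_nonsing_inv _ hQdet]
  have hSchur : W - V * ⅟T * U = Matrix.fromCols R G := by
    rw [hinvT, hV, hU, hW, Matrix.fromCols_mul_fromBlocks, hinvPR, hinvP,
      Matrix.fromCols_mul_fromBlocks, aux_fromColumns_sub]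
    refine congrArg₂ Matrix.fromCols ?_ ?_
    · rw [hR]
      simp only [Matrix.mul_zero, Matrix.zero_mul, Matrix.mul_neg, Matrix.neg_mul, add_zero,
        zero_add, sub_neg_eq_add]
      exact add_comm _ _
    · rw [hG]
      simp only [Matrix.mul_zero, Matrix.zero_mul, Matrix.mul_neg, Matrix.neg_mul, add_zero,
        zero_add, sub_neg_eq_add]
      exact add_comm _ _
  rw [hSchur]
  -- Step 4: fromColumns R G = R * fromColumns 1 Xf
  have hRG : Matrix.fromCols R G = R * Matrix.fromCols 1 Xf := by
    rw [Matrix.mul_fromCols, Matrix.mul_one, hfac]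
  rw [hRG]
  -- Step 5: split off the right factor which has a right inverse
  have hsplit : Matrix.fromBlocks T 0 0 (R * Matrix.fromCols 1 Xf) =
      Matrix.fromBlocks T 0 0 R *
        Matrix.fromBlocks (1 : Matrix (Fin nR ⊕ Fin n) (Fin nR ⊕ Fin n) (RatFunc F)) 0 0 (Matrix.fromCols (1 : Matrix (Fin r) (Fin r) (RatFunc F)) Xf) := by
    rw [Matrix.fromBlocks_multiply]; simp
  rw [hsplit]
  have hrinv : Matrix.fromBlocks
        (1 : Matrix (Fin nR ⊕ Fin n) (Fin nR ⊕ Fin n) (RatFunc F))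
        (0 : Matrix (Fin nR ⊕ Fin n) (Fin r ⊕ Fin m) (RatFunc F))
        (0 : Matrix (Fin r) (Fin nR ⊕ Fin n) (RatFunc F))
        (Matrix.fromCols (1 : Matrix (Fin r) (Fin r) (RatFunc F)) Xf) *
      Matrix.fromBlocks
        (1 : Matrix (Fin nR ⊕ Fin n) (Fin nR ⊕ Fin n) (RatFunc F))
        (0 : Matrix (Fin nR ⊕ Fin n) (Fin r) (RatFunc F))
        (0 : Matrix (Fin r ⊕ Fin m) (Fin nR ⊕ Fin n) (RatFunc F))
        (Matrix.fromRows (1 : Matrix (Fin r) (Fin r) (RatFunc F))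
          (0 : Matrix (Fin m) (Fin r) (RatFunc F))) = 1 := by
    rw [Matrix.fromBlocks_multiply]
    rw [Matrix.fromCols_mul_fromRows]
    rw [← Matrix.fromBlocks_one (l := Fin nR ⊕ Fin n) (m := Fin r) (α := RatFunc F)]
    simp
  have hrankprod : (Matrix.fromBlocks T 0 0 R *
      Matrix.fromBlocks (1 : Matrix (Fin nR ⊕ Fin n) (Fin nR ⊕ Fin n) (RatFunc F)) 0 0
        (Matrix.fromCols (1 : Matrix (Fin r) (Fin r) (RatFunc F)) Xf)).rank =
      (Matrix.fromBlocks T 0 0 R).rank := by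
    apply le_antisymm (Matrix.rank_mul_le_left _ _)
    calc (Matrix.fromBlocks T 0 0 R).rank
        = (Matrix.fromBlocks T 0 0 R *
            (Matrix.fromBlocks (1 : Matrix (Fin nR ⊕ Fin n) (Fin nR ⊕ Fin n) (RatFunc F)) 0 0
              (Matrix.fromCols (1 : Matrix (Fin r) (Fin r) (RatFunc F)) Xf) *
             Matrix.fromBlocks (1 : Matrix (Fin nR ⊕ Fin n) (Fin nR ⊕ Fin n) (RatFunc F)) 0 0
              (Matrix.fromRows (1 : Matrix (Fin r) (Fin r) (RatFunc F))
                (0 : Matrix (Fin m) (Fin r) (RatFunc F))))).rank := by rw [hrinv, Matrix.mul_one]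
      _ ≤ _ := by rw [← Matrix.mul_assoc]; exact Matrix.rank_mul_le_left _ _
  rw [hrankprod]
  -- Step 6: fromBlocks T 0 0 R has full column rank
  have hkerR : LinearMap.ker R.mulVecLin = ⊥ := by
    apply aux_ker_eq_bot_of_rank
    simpa using hRrank
  have hker : LinearMap.ker (Matrix.fromBlocks T 0 0 R).mulVecLin = ⊥ := by
    rw [LinearMap.ker_eq_bot']
    intro x hx
    rw [Matrix.mulVecLin_apply, Matrix.fromBlocks_mulVec] at hx
    have h1 : T *ᵥ (x ∘ Sum.inl) = 0 := by
      have := congrFun hx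
      funext i
      have h := congrFun hx (Sum.inl i)
      simpa using h
    have h2 : R *ᵥ (x ∘ Sum.inr) = 0 := by
      funext i
      have h := congrFun hx (Sum.inr i)
      simpa using h
    have hx1 : x ∘ Sum.inl = 0 := by
      have : ⅟T *ᵥ (T *ᵥ (x ∘ Sum.inl)) = x ∘ Sum.inl := by
        rw [Matrix.mulVec_mulVec, invOf_mul_self, Matrix.one_mulVec]
      rw [h1, Matrix.mulVec_zero] at this
      exact this.symm
    have hx2 : x ∘ Sum.inr = 0 := by
      have : (x ∘ Sum.inr) ∈ LinearMap.ker R.mulVecLin := by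
        rw [LinearMap.mem_ker, Matrix.mulVecLin_apply]; exact h2
      rw [hkerR, Submodule.mem_bot] at this
      exact this
    funext i
    cases i with
    | inl i => exact congrFun hx1 i
    | inr i => exact congrFun hx2 i
  rw [aux_rank_eq_card_of_ker _ hker]
  simp
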